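/- Let E be a real Hilbert space and e₀ ∈ E a unit vector. Define a binary operation ∘ on the unit sphere S = {v ∈ E : ‖v‖ = 1} by x ∘ y = 2⟨J(x), a⟩a − J(x) for y ≠ −e₀, where a = (e₀ + y)/‖e₀ + y‖ and J(v) = 2⟨v, e₀⟩e₀ − v, and x ∘ (−e₀) = −x. Then e₀ is a two-sided identity for ∘: e₀ ∘ y = y and x ∘ e₀ = x for all unit vectors x, y ∈ S. -/

import Mathlib

/-- For the binary operation on the unit sphere of a real Hilbert space given by
`x ∘ y = 2⟨J(x), a⟩a − J(x)` (with `a = (e₀ + y)/‖e₀ + y‖`, `J(v) = 2⟨v, e₀⟩e₀ − v`)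
for `y ≠ -e₀`, and `x ∘ (-e₀) = -x`, the point `e₀` is a two-sided identity. -/
theorem sphere_op_identity {E : Type*} [NormedAddCommGroup E]
    [InnerProductSpace ℝ E] [CompleteSpace E]
    (e₀ : E) (he₀ : ‖e₀‖ = 1) (op : E → E → E)
    (hop : ∀ x y : E, ‖x‖ = 1 → ‖y‖ = 1 → y ≠ -e₀ →
      op x y = (2 * (inner ℝ ((2 * (inner ℝ x e₀ : ℝ)) • e₀ - x)
          (‖e₀ + y‖⁻¹ • (e₀ + y)) : ℝ)) • (‖e₀ + y‖⁻¹ • (e₀ + y)) -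
        ((2 * (inner ℝ x e₀ : ℝ)) • e₀ - x))
    (hop' : ∀ x : E, ‖x‖ = 1 → op x (-e₀) = -x) :
    (∀ y : E, ‖y‖ = 1 → op e₀ y = y) ∧ (∀ x : E, ‖x‖ = 1 → op x e₀ = x) := by
  have hee : (inner ℝ e₀ e₀ : ℝ) = 1 := by
    rw [real_inner_self_eq_norm_sq, he₀]; norm_num
  constructor
  · intro y hy
    by_cases hy' : y = -e₀
    · rw [hy', hop' e₀ he₀]
    · rw [hop e₀ y he₀ hy hy']
      have hne : e₀ + y ≠ 0 := by
        intro h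
        apply hy'
        linear_combination (norm := abel) h
      have hn : ‖e₀ + y‖ ≠ 0 := norm_ne_zero_iff.mpr hne
      have hJ : (2 * (inner ℝ e₀ e₀ : ℝ)) • e₀ - e₀ = e₀ := by
        rw [hee]; norm_num; module
      rw [hJ]
      have hnorm : ‖e₀ + y‖ ^ 2 = 2 + 2 * (inner ℝ e₀ y : ℝ) := by
        rw [← real_inner_self_eq_norm_sq, inner_add_add_self, hee,
          real_inner_self_eq_norm_sq, hy, real_inner_comm]
        ring
      have hiy : (inner ℝ e₀ (‖e₀ + y‖⁻¹ • (e₀ + y)) : ℝ)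
          = ‖e₀ + y‖⁻¹ * (1 + inner ℝ e₀ y) := by
        rw [real_inner_smul_right, inner_add_right, hee]
      rw [hiy, smul_smul]
      have key : 2 * (‖e₀ + y‖⁻¹ * (1 + (inner ℝ e₀ y : ℝ))) * ‖e₀ + y‖⁻¹ = 1 := by
        field_simp
        nlinarith [hnorm]
      rw [key, one_smul]
      abel
  · intro x hx
    have hne : e₀ ≠ -e₀ := by
      intro h
      have h2 : (2 : ℝ) • e₀ = 0 := by linear_combination (norm := module) h
      have : e₀ = 0 := by simpa using (smul_eq_zero.mp h2).resolve_left (by norm_num)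
      rw [this, norm_zero] at he₀; norm_num at he₀
    rw [hop x e₀ hx he₀ hne]
    have h2 : e₀ + e₀ = (2 : ℝ) • e₀ := by module
    have hn2 : ‖e₀ + e₀‖ = 2 := by
      rw [h2, norm_smul, he₀]; simp
    have ha : ‖e₀ + e₀‖⁻¹ • (e₀ + e₀) = e₀ := by
      rw [hn2, h2, smul_smul]; norm_num
    rw [ha, inner_sub_left, real_inner_smul_left, hee]
    match_scalars <;> ring
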